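/- For every (N, D, λ)-graph G and all sets S, T ⊆ V(G), one has |e(S, T) − D·|S|·|T|/N| ≤ λ·√(|S|·|T|·(1 − |S|/N)·(1 − |T|/N)). -/

import Mathlib

open SimpleGraph

/-- The maximum degree of `G` is at most `d`: every vertex has at most `d` neighbours. -/
def MaxDegLE {α : Type*} (G : SimpleGraph α) (d : ℕ) : Prop :=
  ∀ v, (G.neighborSet v).ncard ≤ d

/-- A closed walk `c` in `G` has a chord: an edge of `G` between two vertices of `c`
that is not an edge of `c`. -/
def HasChord {α : Type*} (G : SimpleGraph α) {u : α} (c : G.Walk u u) : Prop :=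
  ∃ x y, x ∈ c.support ∧ y ∈ c.support ∧ G.Adj x y ∧ s(x, y) ∉ c.edges

/-- A graph is chordal if every cycle of length at least 4 has a chord. -/
def IsChordal {α : Type*} (G : SimpleGraph α) : Prop :=
  ∀ (u : α) (c : G.Walk u u), c.IsCycle → 4 ≤ c.length → HasChord G c

/-- `G` has treewidth at most `w`: `G` is a subgraph of a chordal graph with no
clique on `w + 2` vertices. -/
def TreewidthLE {α : Type*} (G : SimpleGraph α) (w : ℕ) : Prop :=
  ∃ G' : SimpleGraph α, G ≤ G' ∧ IsChordal G' ∧ G'.CliqueFree (w + 2)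

/-- `G` contains a copy of `H` (a subgraph isomorphic to `H`). -/
def HasCopy {α β : Type*} (G : SimpleGraph α) (H : SimpleGraph β) : Prop :=
  ∃ f : β ↪ α, ∀ u v, H.Adj u v → G.Adj (f u) (f v)

/-- Under the edge-colouring `c` of `G`, there is a copy of `H` all of whose edges
get colour `col`. -/
def HasMonoCopy {α β : Type*} (G : SimpleGraph α) (c : Sym2 α → Bool)
    (H : SimpleGraph β) (col : Bool) : Prop :=
  ∃ f : β ↪ α, ∀ u v, H.Adj u v → G.Adj (f u) (f v) ∧ c s(f u, f v) = col

/-- `G` is Ramsey for `H`: every 2-colouring of the edges of `G` contains a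
monochromatic copy of `H`. -/
def IsRamsey {α β : Type*} (G : SimpleGraph α) (H : SimpleGraph β) : Prop :=
  ∀ c : Sym2 α → Bool, ∃ col : Bool, HasMonoCopy G c H col

/-- `G` is `d`-degenerate: every nonempty (induced) subgraph has a vertex of degree
at most `d`. -/
def Degenerate {α : Type*} (d : ℕ) (G : SimpleGraph α) : Prop :=
  ∀ s : Set α, s.Nonempty → ∃ v ∈ s, (G.neighborSet v ∩ s).ncard ≤ d

/-- The strong product `G ⊠ H`. -/
def strongProd {α β : Type*} (G : SimpleGraph α) (H : SimpleGraph β) :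
    SimpleGraph (α × β) where
  Adj a b := (a.1 = b.1 ∧ H.Adj a.2 b.2) ∨ (G.Adj a.1 b.1 ∧ a.2 = b.2) ∨
    (G.Adj a.1 b.1 ∧ H.Adj a.2 b.2)
  symm := by
    refine ⟨?_⟩
    rintro a b (⟨h1, h2⟩ | ⟨h1, h2⟩ | ⟨h1, h2⟩)
    · exact Or.inl ⟨h1.symm, h2.symm⟩
    · exact Or.inr (Or.inl ⟨h1.symm, h2.symm⟩)
    · exact Or.inr (Or.inr ⟨h1.symm, h2.symm⟩)
  loopless := by
    refine ⟨?_⟩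
    rintro a (⟨_, h⟩ | ⟨h, _⟩ | ⟨h, _⟩)
    · exact H.irrefl h
    · exact G.irrefl h
    · exact G.irrefl h

/-- The complete `d`-ary tree of height `h`: vertices are sequences over `Fin d`
of length at most `h` (the root is the empty sequence), and each vertex `l` of
length `< h` has the `d` children `a :: l`. -/
def completeAryTree (d h : ℕ) : SimpleGraph {l : List (Fin d) // l.length ≤ h} :=
  SimpleGraph.fromRel (fun v w => ∃ a : Fin d, w.val = a :: v.val)

/-- `G` is an `(N, D, λ)`-graph: a `D`-regular graph on `N` vertices all of whose
adjacency eigenvalues, except the largest one (which is `D`, on the all-ones vector),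
are at most `lam` in absolute value. This is expressed by the equivalent quadratic-form
condition on the orthogonal complement of the all-ones vector. -/
def IsNDL {α : Type*} [Fintype α] (G : SimpleGraph α) [DecidableRel G.Adj]
    (N D : ℕ) (lam : ℝ) : Prop :=
  Fintype.card α = N ∧ (∀ v, (G.neighborSet v).ncard = D) ∧
  ∀ x : α → ℝ, (∑ v, x v) = 0 →
    |∑ v : α, ∑ w : α, (if G.Adj v w then x v * x w else 0)| ≤ lam * ∑ v, x v ^ 2


private lemma indicatorFacts12 {α : Type} [Fintype α] [DecidableEq α] (S : Finset α) (N : ℕ)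
    (hcard : Fintype.card α = N) (hN : (N:ℝ) ≠ 0) :
    (∑ v : α, ((if v ∈ S then (1:ℝ) else 0) - (S.card:ℝ) / N)) = 0 ∧
    (∑ v : α, ((if v ∈ S then (1:ℝ) else 0) - (S.card:ℝ) / N) ^ 2)
      = (S.card:ℝ) * (1 - (S.card:ℝ) / N) := by
  have hsum1 : ∑ v : α, (if v ∈ S then (1:ℝ) else 0) = S.card := by
    rw [Finset.sum_boole]
    simp
  constructor
  · rw [Finset.sum_sub_distrib, hsum1, Finset.sum_const, Finset.card_univ, hcard, nsmul_eq_mul]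
    field_simp
    simp
  · have e1 : ∀ v : α, ((if v ∈ S then (1:ℝ) else 0) - (S.card:ℝ)/N)^2
        = (if v ∈ S then (1:ℝ) else 0) * (1 - 2*((S.card:ℝ)/N)) + ((S.card:ℝ)/N)^2 := by
      intro v; by_cases h : v ∈ S <;> simp [h] <;> ring
    rw [Finset.sum_congr rfl fun v _ => e1 v, Finset.sum_add_distrib, ← Finset.sum_mul,
      hsum1, Finset.sum_const, Finset.card_univ, hcard, nsmul_eq_mul]
    field_simp
    ring

private lemma degreeFacts12 {α : Type} [Fintype α] (G : SimpleGraph α) [DecidableRel G.Adj]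
    (D : ℕ) (hreg : ∀ v, (G.neighborSet v).ncard = D) :
    (∀ v, (∑ w : α, if G.Adj v w then (1:ℝ) else 0) = D) ∧
    (∀ w, (∑ v : α, if G.Adj v w then (1:ℝ) else 0) = D) := by
  have hswap : ∀ v w : α, (if G.Adj v w then (1:ℝ) else 0) = (if G.Adj w v then (1:ℝ) else 0) :=
    fun v w => if_congr (G.adj_comm v w) rfl rfl
  have hrow : ∀ v, (∑ w : α, if G.Adj v w then (1:ℝ) else 0) = D := by
    intro v
    have h1 := hreg v
    rw [Set.ncard_eq_toFinset_card'] at h1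
    have h2 : (G.neighborSet v).toFinset = Finset.univ.filter (fun w => G.Adj v w) := by
      ext w; simp
    rw [h2] at h1
    rw [Finset.sum_boole]
    exact_mod_cast h1
  refine ⟨hrow, fun w => ?_⟩
  rw [Finset.sum_congr rfl fun v _ => hswap v w]
  exact hrow w

private lemma keyExpand12 {α : Type} [Fintype α] [DecidableEq α] (G : SimpleGraph α)
    [DecidableRel G.Adj] (N D : ℕ) (S T : Finset α)
    (hrowdeg : ∀ v, (∑ w : α, if G.Adj v w then (1:ℝ) else 0) = D)
    (hcoldeg : ∀ w, (∑ v : α, if G.Adj v w then (1:ℝ) else 0) = D)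
    (x y : α → ℝ)
    (hx : ∀ v, x v = (if v ∈ S then (1:ℝ) else 0) - (S.card:ℝ)/N)
    (hy : ∀ v, y v = (if v ∈ T then (1:ℝ) else 0) - (T.card:ℝ)/N)
    (hx0 : ∑ v, x v = 0) :
    (∑ v, ∑ w, if G.Adj v w then x v * y w else 0)
      = (∑ u ∈ S, ∑ v ∈ T, if G.Adj u v then (1:ℝ) else 0)
        - (D:ℝ) * S.card * T.card / N := by
  set t : ℝ := (T.card:ℝ)/N with hts
  set s : ℝ := (S.card:ℝ)/N with hss
  have hrowT : ∀ v, (∑ w, if G.Adj v w then y w else 0)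
      = (∑ w ∈ T, if G.Adj v w then (1:ℝ) else 0) - t * D := by
    intro v
    have e1 : ∀ w, (if G.Adj v w then y w else 0)
        = (if w ∈ T then (if G.Adj v w then (1:ℝ) else 0) else 0)
          - t * (if G.Adj v w then (1:ℝ) else 0) := by
      intro w
      by_cases h1 : G.Adj v w <;> by_cases h2 : w ∈ T <;> simp [h1, h2, hy w]
    rw [Finset.sum_congr rfl fun w _ => e1 w, Finset.sum_sub_distrib, ← Finset.mul_sum,
      hrowdeg v, Finset.sum_ite_mem, Finset.univ_inter]
  have hcolsum : (∑ v, ∑ w ∈ T, if G.Adj v w then (1:ℝ) else 0) = D * T.card := by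
    rw [Finset.sum_comm]
    rw [Finset.sum_congr rfl fun w _ => hcoldeg w, Finset.sum_const, nsmul_eq_mul]
    ring
  calc (∑ v, ∑ w, if G.Adj v w then x v * y w else 0)
      = ∑ v, x v * (∑ w, if G.Adj v w then y w else 0) := by
        refine Finset.sum_congr rfl fun v _ => ?_
        rw [Finset.mul_sum]
        exact Finset.sum_congr rfl fun w _ => by split <;> simp
    _ = ∑ v, x v * ((∑ w ∈ T, if G.Adj v w then (1:ℝ) else 0) - t * D) :=
        Finset.sum_congr rfl fun v _ => by rw [hrowT v]
    _ = (∑ v, x v * (∑ w ∈ T, if G.Adj v w then (1:ℝ) else 0)) - t * D * ∑ v, x v := by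
        rw [Finset.mul_sum]
        rw [← Finset.sum_sub_distrib]
        exact Finset.sum_congr rfl fun v _ => by ring
    _ = ∑ v, x v * (∑ w ∈ T, if G.Adj v w then (1:ℝ) else 0) := by rw [hx0]; ring
    _ = (∑ v ∈ S, ∑ w ∈ T, if G.Adj v w then (1:ℝ) else 0)
          - s * ∑ v, (∑ w ∈ T, if G.Adj v w then (1:ℝ) else 0) := by
        have e2 : ∀ v, x v * (∑ w ∈ T, if G.Adj v w then (1:ℝ) else 0)
            = (if v ∈ S then (∑ w ∈ T, if G.Adj v w then (1:ℝ) else 0) else 0)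
              - s * (∑ w ∈ T, if G.Adj v w then (1:ℝ) else 0) := by
          intro v
          by_cases h : v ∈ S <;> simp [h, hx v] <;> ring
        rw [Finset.sum_congr rfl fun v _ => e2 v, Finset.sum_sub_distrib, ← Finset.mul_sum,
          Finset.sum_ite_mem, Finset.univ_inter]
    _ = (∑ u ∈ S, ∑ v ∈ T, if G.Adj u v then (1:ℝ) else 0) - (D:ℝ) * S.card * T.card / N := by
        rw [hcolsum, hss]
        ring

private lemma polar12 {α : Type} [Fintype α] (G : SimpleGraph α) [DecidableRel G.Adj] (lam : ℝ)
    (hquad : ∀ x : α → ℝ, (∑ v, x v) = 0 →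
      |∑ v : α, ∑ w : α, (if G.Adj v w then x v * x w else 0)| ≤ lam * ∑ v, x v ^ 2)
    (x y : α → ℝ) (hx0 : ∑ v, x v = 0) (hy0 : ∑ v, y v = 0) :
    |∑ v, ∑ w, if G.Adj v w then x v * y w else 0|
      ≤ lam * (Real.sqrt (∑ v, x v ^ 2) * Real.sqrt (∑ v, y v ^ 2)) := by
  set b := Real.sqrt (∑ v, x v ^ 2) with hb
  set a := Real.sqrt (∑ v, y v ^ 2) with ha
  have hb0 : 0 ≤ b := Real.sqrt_nonneg _
  have ha0 : 0 ≤ a := Real.sqrt_nonneg _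
  have hbsq : b ^ 2 = ∑ v, x v ^ 2 := Real.sq_sqrt (Finset.sum_nonneg fun v _ => sq_nonneg _)
  have hasq : a ^ 2 = ∑ v, y v ^ 2 := Real.sq_sqrt (Finset.sum_nonneg fun v _ => sq_nonneg _)
  have hBsym : (∑ v, ∑ w, if G.Adj v w then y v * x w else 0)
      = (∑ v, ∑ w, if G.Adj v w then x v * y w else 0) := by
    rw [Finset.sum_comm]
    exact Finset.sum_congr rfl fun v _ => Finset.sum_congr rfl fun w _ =>
      if_congr (G.adj_comm w v) (mul_comm _ _) rfl
  rcases eq_or_lt_of_le (mul_nonneg hb0 ha0) with h0 | hpos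
  · have hB0 : (∑ v, ∑ w, if G.Adj v w then x v * y w else 0) = 0 := by
      rcases mul_eq_zero.mp h0.symm with hz | hz
      · have hxz : ∀ v, x v = 0 := by
          intro v
          have h2 : ∑ v, x v ^ 2 = 0 := by rw [← hbsq, hz]; ring
          have := (Finset.sum_eq_zero_iff_of_nonneg (fun v _ => sq_nonneg (x v))).mp h2 v
            (Finset.mem_univ v)
          exact pow_eq_zero_iff (by norm_num) |>.mp this
        exact Finset.sum_eq_zero fun v _ => Finset.sum_eq_zero fun w _ => by
          simp [hxz v]
      · have hyz : ∀ v, y v = 0 := by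
          intro v
          have h2 : ∑ v, y v ^ 2 = 0 := by rw [← hasq, hz]; ring
          have := (Finset.sum_eq_zero_iff_of_nonneg (fun v _ => sq_nonneg (y v))).mp h2 v
            (Finset.mem_univ v)
          exact pow_eq_zero_iff (by norm_num) |>.mp this
        exact Finset.sum_eq_zero fun v _ => Finset.sum_eq_zero fun w _ => by
          simp [hyz w]
    rw [hB0, abs_zero, ← h0, mul_zero]
  · have hu0 : (∑ v, (a * x v + b * y v)) = 0 := by
      rw [Finset.sum_add_distrib, ← Finset.mul_sum, ← Finset.mul_sum, hx0, hy0]; ring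
    have hw0 : (∑ v, (a * x v - b * y v)) = 0 := by
      rw [Finset.sum_sub_distrib, ← Finset.mul_sum, ← Finset.mul_sum, hx0, hy0]; ring
    have Hu := hquad (fun v => a * x v + b * y v) hu0
    have Hw := hquad (fun v => a * x v - b * y v) hw0
    have hpol : (∑ v, ∑ w, if G.Adj v w then (a*x v + b*y v)*(a*x w + b*y w) else 0)
        - (∑ v, ∑ w, if G.Adj v w then (a*x v - b*y v)*(a*x w - b*y w) else 0)
        = 4*a*b* (∑ v, ∑ w, if G.Adj v w then x v * y w else 0) := by
      rw [← Finset.sum_sub_distrib]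
      have e1 : ∀ v : α, (∑ w, if G.Adj v w then (a*x v + b*y v)*(a*x w + b*y w) else 0)
          - (∑ w, if G.Adj v w then (a*x v - b*y v)*(a*x w - b*y w) else 0)
          = ∑ w, (2*a*b*((if G.Adj v w then x v * y w else 0)
              + (if G.Adj v w then y v * x w else 0))) := by
        intro v
        rw [← Finset.sum_sub_distrib]
        refine Finset.sum_congr rfl fun w _ => ?_
        by_cases h : G.Adj v w <;> simp [h] <;> ring
      rw [Finset.sum_congr rfl fun v _ => e1 v]
      simp only [← Finset.mul_sum]
      simp only [Finset.sum_add_distrib]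
      rw [hBsym]
      ring
    have hUW : (∑ v, (a*x v + b*y v)^2) + (∑ v, (a*x v - b*y v)^2) = 4 * (b^2 * a^2) := by
      rw [← Finset.sum_add_distrib]
      have e2 : ∀ v : α, (a*x v + b*y v)^2 + (a*x v - b*y v)^2
          = 2*a^2*(x v^2) + 2*b^2*(y v^2) := fun v => by ring
      rw [Finset.sum_congr rfl fun v _ => e2 v, Finset.sum_add_distrib,
        ← Finset.mul_sum, ← Finset.mul_sum, ← hbsq, ← hasq]
      ring
    have h4 : |4*a*b* (∑ v, ∑ w, if G.Adj v w then x v * y w else 0)|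
        ≤ lam * (4 * (b^2 * a^2)) := by
      rw [← hpol]
      calc |_ - _| ≤ |∑ v, ∑ w, if G.Adj v w then (a*x v + b*y v)*(a*x w + b*y w) else 0|
            + |∑ v, ∑ w, if G.Adj v w then (a*x v - b*y v)*(a*x w - b*y w) else 0| :=
          abs_sub _ _
        _ ≤ lam * (∑ v, (a*x v + b*y v)^2) + lam * (∑ v, (a*x v - b*y v)^2) :=
          add_le_add Hu Hw
        _ = lam * (4 * (b^2 * a^2)) := by rw [← mul_add, hUW]
    rw [abs_mul, abs_of_nonneg (by positivity : (0:ℝ) ≤ 4*a*b)] at h4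
    have hab : 0 < a * b := by nlinarith
    nlinarith [abs_nonneg (∑ v, ∑ w, if G.Adj v w then x v * y w else 0)]

/-- For every `(N, D, λ)`-graph `G` and all vertex sets `S, T`,
`|e(S,T) - D|S||T|/N| ≤ λ √(|S||T|(1 - |S|/N)(1 - |T|/N))`, where `e(S, T)` counts
the edges with one endpoint in `S` and the other in `T`, edges with both endpoints
in `S ∩ T` being counted twice. -/
theorem statement12 {α : Type} [Fintype α] (G : SimpleGraph α) [DecidableRel G.Adj]
    (N D : ℕ) (lam : ℝ) (hG : IsNDL G N D lam) (S T : Finset α) :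
    |(∑ u ∈ S, ∑ v ∈ T, if G.Adj u v then (1 : ℝ) else 0) -
        (D : ℝ) * S.card * T.card / N| ≤
      lam * Real.sqrt ((S.card : ℝ) * T.card *
        (1 - (S.card : ℝ) / N) * (1 - (T.card : ℝ) / N)) := by
  classical
  obtain ⟨hcard, hreg, hquad⟩ := hG
  rcases Nat.eq_zero_or_pos N with hN | hN
  · subst hN
    have hE : IsEmpty α := Fintype.card_eq_zero_iff.mp hcard
    have hS : S = ∅ := Finset.eq_empty_of_forall_notMem (fun v _ => hE.false v)
    have hT : T = ∅ := Finset.eq_empty_of_forall_notMem (fun v _ => hE.false v)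
    simp [hS, hT]
  have hNne : (N:ℝ) ≠ 0 := Nat.cast_ne_zero.mpr hN.ne'
  obtain ⟨hrowdeg, hcoldeg⟩ := degreeFacts12 G D hreg
  set x : α → ℝ := fun v => (if v ∈ S then (1:ℝ) else 0) - (S.card:ℝ)/N with hxd
  set y : α → ℝ := fun v => (if v ∈ T then (1:ℝ) else 0) - (T.card:ℝ)/N with hyd
  obtain ⟨hx0, hx2⟩ := indicatorFacts12 S N hcard hNne
  obtain ⟨hy0, hy2⟩ := indicatorFacts12 T N hcard hNne
  have hx0' : ∑ v, x v = 0 := hx0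
  have hy0' : ∑ v, y v = 0 := hy0
  have hx2' : ∑ v, x v ^ 2 = (S.card:ℝ) * (1 - (S.card:ℝ)/N) := hx2
  have hy2' : ∑ v, y v ^ 2 = (T.card:ℝ) * (1 - (T.card:ℝ)/N) := hy2
  have hkey := keyExpand12 G N D S T hrowdeg hcoldeg x y (fun v => rfl) (fun v => rfl) hx0'
  have hpolar := polar12 G lam hquad x y hx0' hy0'
  rw [hx2', hy2'] at hpolar
  calc |(∑ u ∈ S, ∑ v ∈ T, if G.Adj u v then (1 : ℝ) else 0) - (D : ℝ) * S.card * T.card / N|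
      = |∑ v, ∑ w, if G.Adj v w then x v * y w else 0| := by rw [hkey]
    _ ≤ lam * (Real.sqrt ((S.card:ℝ) * (1 - (S.card:ℝ)/N))
          * Real.sqrt ((T.card:ℝ) * (1 - (T.card:ℝ)/N))) := hpolar
    _ = lam * Real.sqrt ((S.card : ℝ) * T.card *
          (1 - (S.card : ℝ) / N) * (1 - (T.card : ℝ) / N)) := by
        congr 1
        rw [← Real.sqrt_mul (by rw [← hx2']; positivity)]
        congr 1
        ring
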